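/- arXiv:2106.10536 — 2 statements merged into one kernel-verified Lean document; each statement's English description precedes it below -/
import Mathlib

section
/- Let m ≥ 1, let X ∈ ℍ^m, let Z ∈ ℍ be purely imaginary (Re Z = 0), and let r ∈ (−1, 1). Set N = 1 + ‖X‖²/4, B = N² + |Z|², z_n = −1 + 2N/B − 2Z/B ∈ ℍ, and B_r = ((1−r)/(1+r) + ‖X‖²/4)² + |Z|². Then (1 − r²)^{−1} · |1 − r·z_n|² = ((1+r)/(1−r)) · B_r / B. (Equivalently, with r = tanh t this is the identity λ_{a_t}∘𝒞 = e^{−t} B^{1/2} B_t^{−1/2} for the Busemann cocycle composed with the Cayley transform.) -/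
open Quaternion

/-- the identity `(1 - r²)⁻¹ |1 - r zₙ|² = ((1+r)/(1-r)) Bᵣ / B`, i.e.
`λ_{a_t} ∘ 𝒞 = e^{-t} B^{1/2} B_t^{-1/2}` with `r = tanh t`. -/
theorem stmt_0 (m : ℕ) (hm : 1 ≤ m) (X : Fin m → Quaternion ℝ) (Z : Quaternion ℝ)
    (hZ : Z.re = 0) (r : ℝ) (hr : r ∈ Set.Ioo (-1 : ℝ) 1)
    (N B Br : ℝ) (zn : Quaternion ℝ)
    (hN : N = 1 + (∑ j, Quaternion.normSq (X j)) / 4)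
    (hB : B = N ^ 2 + Quaternion.normSq Z)
    (hzn : zn = -1 + ((2 * N / B : ℝ) : Quaternion ℝ) - ((2 / B : ℝ) : Quaternion ℝ) * Z)
    (hBr : Br = ((1 - r) / (1 + r) + (∑ j, Quaternion.normSq (X j)) / 4) ^ 2
        + Quaternion.normSq Z) :
    (1 - r ^ 2)⁻¹ * Quaternion.normSq (1 - (r : Quaternion ℝ) * zn)
      = ((1 + r) / (1 - r)) * Br / B := by
  obtain ⟨hr1, hr2⟩ := hr
  set s : ℝ := ∑ j, Quaternion.normSq (X j) with hs
  set q : ℝ := Quaternion.normSq Z with hqdef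
  have hs0 : 0 ≤ s := Finset.sum_nonneg fun j _ => Quaternion.normSq_nonneg
  have hq : q = Z.imI ^ 2 + Z.imJ ^ 2 + Z.imK ^ 2 := by
    rw [hqdef, Quaternion.normSq_def', hZ]; ring
  have hq0 : 0 ≤ q := Quaternion.normSq_nonneg
  have hN1 : (1 : ℝ) ≤ N := by rw [hN]; linarith
  have hBpos : 0 < B := by rw [hB]; nlinarith
  have hBne : B ≠ 0 := ne_of_gt hBpos
  have h1r : (0:ℝ) < 1 - r := by linarith
  have h2r : (0:ℝ) < 1 + r := by linarith
  have h1rn : (1:ℝ) - r ≠ 0 := ne_of_gt h1r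
  have h2rn : (1:ℝ) + r ≠ 0 := ne_of_gt h2r
  have hnorm : Quaternion.normSq (1 - (r : Quaternion ℝ) * zn)
      = (1 + r - 2*r*N/B)^2 + (2*r/B)^2 * q := by
    rw [Quaternion.normSq_def', hzn]
    simp only [Quaternion.re_add, Quaternion.re_sub, Quaternion.re_neg, Quaternion.re_one,
      Quaternion.re_coe, Quaternion.re_mul, Quaternion.imI_coe, Quaternion.imJ_coe,
      Quaternion.imK_coe, Quaternion.imI_add, Quaternion.imI_sub, Quaternion.imI_neg,
      Quaternion.imI_one, Quaternion.imI_mul, Quaternion.imJ_add, Quaternion.imJ_sub,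
      Quaternion.imJ_neg, Quaternion.imJ_one, Quaternion.imJ_mul, Quaternion.imK_add,
      Quaternion.imK_sub, Quaternion.imK_neg, Quaternion.imK_one, Quaternion.imK_mul, hZ]
    rw [hq]; ring
  have hBr' : (1 + r)^2 * Br = ((1 - r) + (1 + r) * s / 4)^2 + (1 + r)^2 * q := by
    rw [hBr]; field_simp
  have key : ((1 + r) * B - 2*r*N)^2 + 4*r^2*q = ((1 + r)^2 * Br) * B := by
    rw [hBr', hB, hN]; ring
  rw [hnorm]
  rw [div_mul_eq_mul_div, div_div, eq_div_iff (by positivity)]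
  rw [inv_mul_eq_div, div_mul_eq_mul_div, div_eq_iff (by nlinarith : (1:ℝ) - r^2 ≠ 0)]
  have hB2 : B^2 ≠ 0 := pow_ne_zero _ hBne
  field_simp
  linear_combination (1 - r) * key
end

section
/- Let m ≥ 1, let X ∈ ℍ^m, and let Z ∈ ℍ be purely imaginary. Let A(X,Z) be the (m+2)×(m+2) quaternion matrix written in block form (blocks of sizes 1, m, 1) as A(X,Z) = [[Z/2, −X*/2, Z/2], [−X/2, 0, −X/2], [−Z/2, X*/2, −Z/2]], where X is a column vector and X* its conjugate-transpose row vector. Then the matrix exponential of A(X,Z) equals M(X,Z) := [[1 + ‖X‖²/8 + Z/2, −X*/2, ‖X‖²/8 + Z/2], [−X/2, I_m, −X/2], [−‖X‖²/8 − Z/2, X*/2, 1 − ‖X‖²/8 − Z/2]]. (In particular A(X,Z)³ = 0 and exp(A) = I + A + A²/2.) -/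
open Quaternion Matrix

noncomputable section

/-- The index type for `(m+2) × (m+2)` matrices in `(1, m, 1)` block form. -/
abbrev Idx (m : ℕ) := Unit ⊕ Fin m ⊕ Unit

/-- The nilpotent Lie algebra element
`A(X,Z) = [[Z/2, -X*/2, Z/2], [-X/2, 0, -X/2], [-Z/2, X*/2, -Z/2]]`. -/
def matA (m : ℕ) (X : Fin m → Quaternion ℝ) (Z : Quaternion ℝ) :
    Matrix (Idx m) (Idx m) (Quaternion ℝ) :=
  Matrix.of fun i j =>
    match i, j with
    | Sum.inl _, Sum.inl _ => Z / 2
    | Sum.inl _, Sum.inr (Sum.inl k) => -star (X k) / 2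
    | Sum.inl _, Sum.inr (Sum.inr _) => Z / 2
    | Sum.inr (Sum.inl k), Sum.inl _ => -X k / 2
    | Sum.inr (Sum.inl _), Sum.inr (Sum.inl _) => 0
    | Sum.inr (Sum.inl k), Sum.inr (Sum.inr _) => -X k / 2
    | Sum.inr (Sum.inr _), Sum.inl _ => -Z / 2
    | Sum.inr (Sum.inr _), Sum.inr (Sum.inl k) => star (X k) / 2
    | Sum.inr (Sum.inr _), Sum.inr (Sum.inr _) => -Z / 2

/-- The group element `M(X,Z) = exp(A(X,Z))`:
`[[1 + ‖X‖²/8 + Z/2, -X*/2, ‖X‖²/8 + Z/2], [-X/2, I, -X/2],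
  [-‖X‖²/8 - Z/2, X*/2, 1 - ‖X‖²/8 - Z/2]]`, where `‖X‖² = ∑ⱼ |Xⱼ|²`. -/
def matM (m : ℕ) (X : Fin m → Quaternion ℝ) (Z : Quaternion ℝ) :
    Matrix (Idx m) (Idx m) (Quaternion ℝ) :=
  Matrix.of fun i j =>
    match i, j with
    | Sum.inl _, Sum.inl _ =>
        1 + (((∑ k, Quaternion.normSq (X k)) / 8 : ℝ) : Quaternion ℝ) + Z / 2
    | Sum.inl _, Sum.inr (Sum.inl k) => -star (X k) / 2
    | Sum.inl _, Sum.inr (Sum.inr _) =>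
        (((∑ k, Quaternion.normSq (X k)) / 8 : ℝ) : Quaternion ℝ) + Z / 2
    | Sum.inr (Sum.inl k), Sum.inl _ => -X k / 2
    | Sum.inr (Sum.inl k), Sum.inr (Sum.inl l) => if k = l then 1 else 0
    | Sum.inr (Sum.inl k), Sum.inr (Sum.inr _) => -X k / 2
    | Sum.inr (Sum.inr _), Sum.inl _ =>
        -(((∑ k, Quaternion.normSq (X k)) / 8 : ℝ) : Quaternion ℝ) - Z / 2
    | Sum.inr (Sum.inr _), Sum.inr (Sum.inl k) => star (X k) / 2
    | Sum.inr (Sum.inr _), Sum.inr (Sum.inr _) =>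
        1 - (((∑ k, Quaternion.normSq (X k)) / 8 : ℝ) : Quaternion ℝ) - Z / 2

/-- Auxiliary: the square `A(X,Z)² = [[s,0,s],[0,0,0],[-s,0,-s]]` with `s = ‖X‖²/4`. -/
def matS (m : ℕ) (X : Fin m → Quaternion ℝ) :
    Matrix (Idx m) (Idx m) (Quaternion ℝ) :=
  Matrix.of fun i j =>
    match i, j with
    | Sum.inl _, Sum.inl _ => (((∑ k, Quaternion.normSq (X k)) / 4 : ℝ) : Quaternion ℝ)
    | Sum.inl _, Sum.inr (Sum.inr _) => (((∑ k, Quaternion.normSq (X k)) / 4 : ℝ) : Quaternion ℝ)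
    | Sum.inr (Sum.inr _), Sum.inl _ => -(((∑ k, Quaternion.normSq (X k)) / 4 : ℝ) : Quaternion ℝ)
    | Sum.inr (Sum.inr _), Sum.inr (Sum.inr _) =>
        -(((∑ k, Quaternion.normSq (X k)) / 4 : ℝ) : Quaternion ℝ)
    | _, _ => 0

lemma half_smul (a : Quaternion ℝ) : a / 2 = ((2:ℝ))⁻¹ • a := by
  rw [div_eq_mul_inv,
    show ((2:Quaternion ℝ))⁻¹ = (((2:ℝ)⁻¹ : ℝ) : Quaternion ℝ) by push_cast; rfl]
  exact Quaternion.mul_coe_eq_smul _ _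

lemma key' (a : Quaternion ℝ) :
    star a / 2 * (a / 2) = ((Quaternion.normSq a / 4 : ℝ) : Quaternion ℝ) := by
  rw [half_smul, half_smul, smul_mul_smul_comm, Quaternion.star_mul_self, Quaternion.smul_coe]
  norm_cast
  ring

lemma coe_sum' {m : ℕ} (f : Fin m → ℝ) :
    ((∑ k, f k : ℝ) : Quaternion ℝ) = ∑ k, ((f k : ℝ) : Quaternion ℝ) := by
  rw [← Quaternion.algebraMap_def, map_sum]

lemma matA_sq (m : ℕ) (X : Fin m → Quaternion ℝ) (Z : Quaternion ℝ) :
    matA m X Z ^ 2 = matS m X := by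
  refine Matrix.ext fun i j => ?_
  rw [sq, Matrix.mul_apply]
  rcases i with i | i | i <;> rcases j with j | j | j <;>
    simp only [matA, matS, Matrix.of_apply, Fintype.sum_sum_type, Finset.univ_unique,
      Finset.sum_singleton, neg_div, neg_mul, mul_neg, neg_neg, mul_zero, zero_mul,
      Finset.sum_const_zero] <;>
    (try simp_rw [key']) <;> push_cast [Finset.sum_div, coe_sum'] <;>
    (try simp only [Finset.sum_const_zero, Finset.sum_neg_distrib]) <;> abel

lemma matA_cube (m : ℕ) (X : Fin m → Quaternion ℝ) (Z : Quaternion ℝ) :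
    matA m X Z ^ 3 = 0 := by
  have h3 : matA m X Z ^ 3 = matS m X * matA m X Z := by
    rw [pow_succ, matA_sq]
  rw [h3]
  refine Matrix.ext fun i j => ?_
  rw [Matrix.mul_apply]
  rcases i with i | i | i <;> rcases j with j | j | j <;>
    simp only [matA, matS, Matrix.of_apply, Fintype.sum_sum_type, Finset.univ_unique,
      Finset.sum_singleton, neg_div, neg_mul, mul_neg, neg_neg, mul_zero, zero_mul,
      Matrix.zero_apply] <;> (try simp only [Finset.sum_const_zero, smul_eq_mul]) <;>
    (try abel) <;> simp [neg_mul]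

lemma exp_of_cube_zero {𝔸 : Type*} [Ring 𝔸] [Algebra ℝ 𝔸] [TopologicalSpace 𝔸]
    [IsTopologicalRing 𝔸] [T2Space 𝔸] (x : 𝔸) (hx : x ^ 3 = 0) :
    NormedSpace.exp x = 1 + x + ((2:ℝ))⁻¹ • x ^ 2 := by
  simp only [NormedSpace.exp_eq_tsum ℝ]
  have h : ∀ n ∉ Finset.range 3, ((n.factorial : ℝ))⁻¹ • x ^ n = 0 := by
    intro n hn
    have h3 : 3 ≤ n := by simpa using hn
    obtain ⟨k, rfl⟩ := Nat.exists_eq_add_of_le h3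
    rw [pow_add, hx, zero_mul, smul_zero]
  rw [tsum_eq_sum h]
  simp [Finset.sum_range_succ, Nat.factorial]

/-- the matrix exponential of `A(X,Z)` equals `M(X,Z)`. -/
theorem stmt_2 (m : ℕ) (hm : 1 ≤ m) (X : Fin m → Quaternion ℝ) (Z : Quaternion ℝ)
    (hZ : Z.re = 0) :
    NormedSpace.exp (matA m X Z) = matM m X Z := by
  rw [exp_of_cube_zero _ (matA_cube m X Z), matA_sq]
  have h48 : ((2:ℝ))⁻¹ • (((∑ k, Quaternion.normSq (X k)) / 4 : ℝ) : Quaternion ℝ)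
      = (((∑ k, Quaternion.normSq (X k)) / 8 : ℝ) : Quaternion ℝ) := by
    rw [Quaternion.smul_coe]
    norm_cast
    ring
  refine Matrix.ext fun i j => ?_
  rcases i with i | i | i <;> rcases j with j | j | j <;>
    simp only [matA, matS, matM, Matrix.of_apply, Matrix.add_apply, Matrix.smul_apply,
      Matrix.one_apply, smul_zero, smul_neg, h48, neg_div, sub_eq_add_neg,
      Sum.inl.injEq, Sum.inr.injEq, if_true, reduceCtorEq, if_false] <;>
    (try abel) <;> norm_num
end
end
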